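/- If Ψ and Ψ' are strictly convex piecewise linear functions adapted to two complete quasifans Σ and Σ' in ℚ^n respectively, then for a suitable positive scaling the function Ψ + λΨ' is strictly convex with respect to the intersection quasifan {σ ∩ σ' : σ ∈ Σ, σ' ∈ Σ'}. In particular, the intersection of two finite projective quasifans is a projective quasifan. -/

import Mathlib

/-- The finitely generated convex cone on a set `T`: all nonnegative rational
combinations of elements of `T`. -/
def ConeGen {V : Type*} [AddCommGroup V] [Module ℚ V] (T : Set V) : Set V :=
  {x | ∃ (s : Finset V) (c : V → ℚ), ↑s ⊆ T ∧ (∀ v, 0 ≤ c v) ∧ x = ∑ v ∈ s, c v • v}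

/-- A (rational) polyhedral cone: the cone generated by finitely many vectors. -/
def IsPolyCone {V : Type*} [AddCommGroup V] [Module ℚ V] (σ : Set V) : Prop :=
  ∃ T : Finset V, σ = ConeGen (↑T : Set V)

/-- A cone is strongly convex if it contains no line. -/
def IsStronglyConvex {V : Type*} [AddCommGroup V] [Module ℚ V] (σ : Set V) : Prop :=
  ∀ x ∈ σ, -x ∈ σ → x = 0

/-- The dimension of a cone: the dimension of its linear span. -/
noncomputable def coneDim {V : Type*} [AddCommGroup V] [Module ℚ V] (σ : Set V) : ℕ :=
  Module.finrank ℚ (Submodule.span ℚ σ)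

/-- `τ` is a face of `σ`: the intersection of `σ` with a supporting hyperplane
(including `σ` itself, via the zero functional). -/
def IsFace {V : Type*} [AddCommGroup V] [Module ℚ V] (σ τ : Set V) : Prop :=
  ∃ m : V →ₗ[ℚ] ℚ, (∀ x ∈ σ, 0 ≤ m x) ∧ τ = σ ∩ {x | m x = 0}

/-- `τ` is a facet of `σ`: a face of dimension one less. -/
def IsFacet {V : Type*} [AddCommGroup V] [Module ℚ V] (σ τ : Set V) : Prop :=
  IsFace σ τ ∧ coneDim τ + 1 = coneDim σ

/-- A quasifan: a finite collection of (not necessarily strongly) convex rational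
polyhedral cones, closed under taking facets, such that the intersection of any two
cones is a face of each. -/
def IsQuasifan {V : Type*} [AddCommGroup V] [Module ℚ V] (F : Set (Set V)) : Prop :=
  F.Finite ∧ (∀ σ ∈ F, IsPolyCone σ) ∧
  (∀ σ ∈ F, ∀ τ, IsFacet σ τ → τ ∈ F) ∧
  (∀ σ ∈ F, ∀ σ' ∈ F, IsFace σ (σ ∩ σ') ∧ IsFace σ' (σ ∩ σ'))

/-- A collection of cones is complete if it covers the whole space. -/
def IsCompleteFan {V : Type*} [AddCommGroup V] [Module ℚ V] (F : Set (Set V)) : Prop :=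
  ⋃₀ F = Set.univ

/-- `Ψ` is piecewise linear with respect to `F`: linear on each cone of `F`. -/
def IsPLOn {V : Type*} [AddCommGroup V] [Module ℚ V] (F : Set (Set V)) (Ψ : V → ℚ) : Prop :=
  ∀ σ ∈ F, ∃ ℓ : V →ₗ[ℚ] ℚ, ∀ x ∈ σ, Ψ x = ℓ x

/-- `Ψ` is a strictly convex piecewise linear function adapted to `F`: it is linear on
each cone, and for each maximal cone the linear piece lies strictly below `Ψ` away
from that cone. -/
def IsStrictlyConvexPLOn {V : Type*} [AddCommGroup V] [Module ℚ V]
    (F : Set (Set V)) (Ψ : V → ℚ) : Prop :=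
  IsPLOn F Ψ ∧ ∀ σ ∈ F, Maximal (· ∈ F) σ →
    ∃ ℓ : V →ₗ[ℚ] ℚ, (∀ x ∈ σ, Ψ x = ℓ x) ∧ ∀ x ∉ σ, ℓ x < Ψ x

/-- A quasifan is projective if it admits a strictly convex piecewise linear function. -/
def IsProjectiveFan {V : Type*} [AddCommGroup V] [Module ℚ V] (F : Set (Set V)) : Prop :=
  ∃ Ψ : V → ℚ, IsStrictlyConvexPLOn F Ψ



namespace QfAux
open Classical
variable {V : Type*} [AddCommGroup V] [Module ℚ V]

theorem subset_coneGen {T : Set V} : T ⊆ ConeGen T := by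
  intro v hv
  refine ⟨{v}, fun w => if w = v then 1 else 0, by simpa using hv, ?_, ?_⟩
  · intro w; dsimp only; split <;> norm_num
  · simp

theorem zero_mem_coneGen {T : Set V} : (0:V) ∈ ConeGen T :=
  ⟨∅, 0, by simp, fun v => le_rfl, by simp⟩

theorem coneGen_mono {T T' : Set V} (h : T ⊆ T') : ConeGen T ⊆ ConeGen T' := by
  rintro x ⟨s, c, hs, hc, rfl⟩; exact ⟨s, c, hs.trans h, hc, rfl⟩

theorem smul_mem_coneGen {T : Set V} {x : V} (hx : x ∈ ConeGen T) {t : ℚ} (ht : 0 ≤ t) :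
    t • x ∈ ConeGen T := by
  obtain ⟨s, c, hs, hc, rfl⟩ := hx
  refine ⟨s, fun v => t * c v, hs, fun v => mul_nonneg ht (hc v), ?_⟩
  rw [Finset.smul_sum]
  exact Finset.sum_congr rfl fun v _ => by rw [mul_smul]

theorem add_mem_coneGen {T : Set V} {x y : V} (hx : x ∈ ConeGen T) (hy : y ∈ ConeGen T) :
    x + y ∈ ConeGen T := by
  obtain ⟨s, c, hs, hc, rfl⟩ := hx
  obtain ⟨s', c', hs', hc', rfl⟩ := hy
  refine ⟨s ∪ s', fun v => (if v ∈ s then c v else 0) + (if v ∈ s' then c' v else 0),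
    ?_, fun v => add_nonneg (by split <;> [exact hc _; rfl]) (by split <;> [exact hc' _; rfl]), ?_⟩
  · intro v hv; rcases Finset.mem_union.1 (by exact_mod_cast hv) with h | h
    exacts [hs h, hs' h]
  · rw [Finset.sum_congr rfl (fun v _ => add_smul _ _ v), Finset.sum_add_distrib]
    congr 1
    · rw [← Finset.sum_subset Finset.subset_union_left (fun v _ hv => by simp [hv])]
      exact Finset.sum_congr rfl fun v hv => by simp [hv]
    · rw [← Finset.sum_subset Finset.subset_union_right (fun v _ hv => by simp [hv])]
      exact Finset.sum_congr rfl fun v hv => by simp [hv]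

/-- a linear functional nonneg on `T` is nonneg on `ConeGen T`. -/
theorem coneGen_nonneg {T : Set V} {m : V →ₗ[ℚ] ℚ} (hm : ∀ v ∈ T, 0 ≤ m v)
    {x : V} (hx : x ∈ ConeGen T) : 0 ≤ m x := by
  obtain ⟨s, c, hs, hc, rfl⟩ := hx
  rw [map_sum]
  exact Finset.sum_nonneg fun v hv => by
    rw [map_smul]; exact mul_nonneg (hc v) (hm v (hs hv))

theorem coneGen_eq_zero {T : Set V} {m : V →ₗ[ℚ] ℚ} (hm : ∀ v ∈ T, m v = 0)
    {x : V} (hx : x ∈ ConeGen T) : m x = 0 := by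
  obtain ⟨s, c, hs, hc, rfl⟩ := hx
  rw [map_sum]
  exact Finset.sum_eq_zero fun v hv => by rw [map_smul, hm v (hs hv), smul_zero]

theorem coneGen_subset_span {T : Set V} : ConeGen T ⊆ (Submodule.span ℚ T : Set V) := by
  rintro x ⟨s, c, hs, hc, rfl⟩
  exact Submodule.sum_mem _ fun v hv =>
    Submodule.smul_mem _ _ (Submodule.subset_span (hs hv))

theorem span_coneGen {T : Set V} : Submodule.span ℚ (ConeGen T) = Submodule.span ℚ T :=
  le_antisymm (Submodule.span_le.2 coneGen_subset_span)
    (Submodule.span_mono subset_coneGen)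

/-- Faces of finitely generated cones: T2. -/
theorem coneGen_inter_ker {T : Set V} {m : V →ₗ[ℚ] ℚ} (hm : ∀ v ∈ T, 0 ≤ m v) :
    ConeGen T ∩ {x | m x = 0} = ConeGen (T ∩ {x | m x = 0}) := by
  apply Set.Subset.antisymm
  · rintro x ⟨⟨s, c, hs, hc, rfl⟩, hx0⟩
    have key : ∀ v ∈ s, c v * m v = 0 := by
      have : ∑ v ∈ s, c v * m v = 0 := by
        have := hx0
        simp only [Set.mem_setOf_eq, map_sum, map_smul, smul_eq_mul] at this
        exact this
      intro v hv
      have h1 : ∀ v ∈ s, 0 ≤ c v * m v := fun v hv => mul_nonneg (hc v) (hm v (hs hv))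
      exact (Finset.sum_eq_zero_iff_of_nonneg h1).1 this v hv
    refine ⟨s.filter (fun v => m v = 0), c, ?_, hc, ?_⟩
    · intro v hv
      simp only [Finset.coe_filter, Set.mem_setOf_eq] at hv
      exact ⟨hs hv.1, hv.2⟩
    · rw [Finset.sum_filter]
      refine Finset.sum_congr rfl fun v hv => ?_
      split
      · rfl
      · next h =>
        rcases mul_eq_zero.1 (key v hv) with h' | h'
        · rw [h', zero_smul]
        · exact absurd h' h
  · intro x hx
    refine ⟨coneGen_mono Set.inter_subset_left hx, ?_⟩
    exact coneGen_eq_zero (fun v hv => hv.2) hx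

theorem sum_mem_coneGen {s : Finset V} {T : Set V} (h : ↑s ⊆ T) :
    (∑ v ∈ s, v) ∈ ConeGen T :=
  ⟨s, fun _ => 1, h, fun _ => zero_le_one, by simp⟩

end QfAux

namespace QfAux
variable {n : ℕ}

/-- dot product as a linear functional in the second variable. -/
noncomputable def dotL (a : Fin n → ℚ) : (Fin n → ℚ) →ₗ[ℚ] ℚ where
  toFun x := ∑ i, a i * x i
  map_add' x y := by simp [mul_add, Finset.sum_add_distrib]
  map_smul' t x := by simp [Finset.mul_sum]; ring_nf; simp [mul_assoc, mul_comm, mul_left_comm]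

theorem dotL_apply (a x : Fin n → ℚ) : dotL a x = ∑ i, a i * x i := rfl

theorem dotL_comm (a x : Fin n → ℚ) : dotL a x = dotL x a := by
  simp [dotL_apply, mul_comm]

theorem dotL_add_left (a b x : Fin n → ℚ) : dotL (a + b) x = dotL a x + dotL b x := by
  simp [dotL_apply, add_mul, Finset.sum_add_distrib]

theorem dotL_smul_left (t : ℚ) (a x : Fin n → ℚ) : dotL (t • a) x = t * dotL a x := by
  simp [dotL_apply, Finset.mul_sum, mul_assoc]

theorem dotL_sub_left (a b x : Fin n → ℚ) : dotL (a - b) x = dotL a x - dotL b x := by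
  simp [dotL_apply, sub_mul, Finset.sum_sub_distrib]

/-- the polyhedral cone determined by a finite set of (inner) normal vectors. -/
def PCone (A : Finset (Fin n → ℚ)) : Set (Fin n → ℚ) := {x | ∀ a ∈ A, 0 ≤ dotL a x}

theorem PCone_union (A B : Finset (Fin n → ℚ)) : PCone (A ∪ B) = PCone A ∩ PCone B := by
  ext x
  simp only [PCone, Set.mem_setOf_eq, Set.mem_inter_iff, Finset.mem_union]
  constructor
  · exact fun h => ⟨fun a ha => h a (Or.inl ha), fun a ha => h a (Or.inr ha)⟩
  · rintro ⟨h1, h2⟩ a (ha | ha); exacts [h1 a ha, h2 a ha]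

theorem coneGen_empty : ConeGen (∅ : Set (Fin n → ℚ)) = {0} := by
  apply Set.Subset.antisymm
  · rintro x ⟨s, c, hs, hc, rfl⟩
    have : s = ∅ := by simpa using hs
    simp [this]
  · rintro x rfl; exact zero_mem_coneGen

theorem coneGen_insert (u : Fin n → ℚ) (T : Set (Fin n → ℚ)) :
    ConeGen (insert u T) = {y | ∃ x ∈ ConeGen T, ∃ t : ℚ, 0 ≤ t ∧ y = x + t • u} := by
  apply Set.Subset.antisymm
  · rintro y ⟨s, c, hs, hc, rfl⟩
    by_cases hu : u ∈ s
    · refine ⟨∑ v ∈ s.erase u, c v • v, ⟨s.erase u, c, ?_, hc, rfl⟩, c u, hc u, ?_⟩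
      · intro v hv
        have hv' := Finset.mem_erase.1 (by exact_mod_cast hv)
        rcases hs (by exact_mod_cast hv'.2) with h | h
        · exact absurd h hv'.1
        · exact h
      · rw [← Finset.add_sum_erase _ _ hu, add_comm]
    · refine ⟨∑ v ∈ s, c v • v, ⟨s, c, ?_, hc, rfl⟩, 0, le_rfl, by simp⟩
      intro v hv
      rcases hs hv with h | h
      · subst h; exact absurd (by exact_mod_cast hv) hu
      · exact h
  · rintro y ⟨x, hx, t, ht, rfl⟩
    exact add_mem_coneGen (coneGen_mono (Set.subset_insert u T) hx)
      (smul_mem_coneGen (subset_coneGen (Set.mem_insert u T)) ht)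

end QfAux

namespace QfAux
variable {n : ℕ}

theorem dotL_single (i : Fin n) (c : ℚ) (x : Fin n → ℚ) :
    dotL (Pi.single i c) x = c * x i := by
  rw [dotL_apply]
  rw [Finset.sum_eq_single i]
  · simp
  · intro j _ hj; rw [Pi.single_apply]; simp [hj]
  · simp

theorem div_le_div_neg_pos {a b c d : ℚ} (hb : b < 0) (hd : 0 < d)
    (h : 0 ≤ d * a - b * c) : a / b ≤ c / d := by
  rw [le_div_iff₀ hd, div_mul_eq_mul_div, div_le_iff_of_neg hb]
  nlinarith

theorem weyl (T : Finset (Fin n → ℚ)) : ∃ A : Finset (Fin n → ℚ), ConeGen (↑T) = PCone A := by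
  classical
  induction T using Finset.induction_on with
  | empty =>
    refine ⟨(Finset.univ.image fun i => Pi.single i (1:ℚ)) ∪
      (Finset.univ.image fun i => Pi.single i (-1:ℚ)), ?_⟩
    rw [Finset.coe_empty, coneGen_empty]
    ext x
    simp only [Set.mem_singleton_iff, PCone, Set.mem_setOf_eq, Finset.mem_union,
      Finset.mem_image, Finset.mem_univ, true_and]
    constructor
    · rintro rfl a ha
      rcases ha with ⟨i, rfl⟩ | ⟨i, rfl⟩ <;> simp [dotL_single]
    · intro h
      funext i
      have h1 := h _ (Or.inl ⟨i, rfl⟩)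
      have h2 := h _ (Or.inr ⟨i, rfl⟩)
      rw [dotL_single] at h1 h2
      simp only [one_mul, neg_mul] at h1 h2
      have : x i = 0 := le_antisymm (by linarith) h1
      simpa using this
  | @insert u T hu IH =>
    obtain ⟨A, hA⟩ := IH
    set A0 := A.filter (fun a => dotL a u = 0) with hA0
    set Ap := A.filter (fun a => 0 < dotL a u) with hAp
    set An := A.filter (fun a => dotL a u < 0) with hAn
    set R := (Ap ×ˢ An).image
      (fun pq => dotL pq.1 u • pq.2 - dotL pq.2 u • pq.1) with hR
    refine ⟨(A0 ∪ Ap) ∪ R, ?_⟩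
    rw [Finset.coe_insert, coneGen_insert, hA]
    ext y
    simp only [Set.mem_setOf_eq, PCone, Finset.mem_union]
    constructor
    · rintro ⟨x, hx, t, ht, rfl⟩ b hb
      have lin : ∀ a : Fin n → ℚ, dotL a (x + t • u) = dotL a x + t * dotL a u := by
        intro a; rw [map_add, map_smul]; rfl
      rcases hb with (hb | hb) | hb
      · rw [lin]
        have h1 := (Finset.mem_filter.1 hb).2
        have h2 := hx b (Finset.mem_filter.1 hb).1
        rw [h1]; linarith
      · rw [lin]
        have h1 := (Finset.mem_filter.1 hb).2
        have h2 := hx b (Finset.mem_filter.1 hb).1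
        nlinarith
      · simp only [hR, Finset.mem_image, Finset.mem_product] at hb
        obtain ⟨⟨p, q⟩, ⟨hp, hq⟩, rfl⟩ := hb
        have hpu := (Finset.mem_filter.1 hp).2
        have hqu := (Finset.mem_filter.1 hq).2
        have hpx := hx p (Finset.mem_filter.1 hp).1
        have hqx := hx q (Finset.mem_filter.1 hq).1
        rw [dotL_sub_left, dotL_smul_left, dotL_smul_left, lin, lin]
        nlinarith
    · intro hy
      have h0 : ∀ a ∈ A0, 0 ≤ dotL a y := fun a ha => hy a (Or.inl (Or.inl ha))
      have hp : ∀ a ∈ Ap, 0 ≤ dotL a y := fun a ha => hy a (Or.inl (Or.inr ha))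
      have hr : ∀ b ∈ R, 0 ≤ dotL b y := fun b hb => hy b (Or.inr hb)
      by_cases hAnne : An.Nonempty
      · obtain ⟨q₀, hq₀, hq₀max⟩ :=
          Finset.exists_max_image An (fun q => dotL q y / dotL q u) hAnne
        have hq₀u := (Finset.mem_filter.1 hq₀).2
        set t := max 0 (dotL q₀ y / dotL q₀ u) with htdef
        have ht : 0 ≤ t := le_max_left _ _
        refine ⟨y - t • u, ?_, t, ht, by abel⟩
        intro a ha
        have lin : dotL a (y - t • u) = dotL a y - t * dotL a u := by
          rw [map_sub, map_smul]; rfl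
        rw [lin, sub_nonneg]
        rcases lt_trichotomy (dotL a u) 0 with hau | hau | hau
        · -- a ∈ An : need t * (a·u) ≤ a·y, i.e. a·y/a·u ≤ t
          have : dotL a y / dotL a u ≤ t :=
            le_trans (hq₀max a (Finset.mem_filter.2 ⟨ha, hau⟩)) (le_max_right _ _)
          calc t * dotL a u ≤ (dotL a y / dotL a u) * dotL a u := by
                apply mul_le_mul_of_nonpos_right this hau.le
            _ = dotL a y := div_mul_cancel₀ _ hau.ne
        · rw [hau, mul_zero]; exact h0 a (Finset.mem_filter.2 ⟨ha, hau⟩)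
        · -- a ∈ Ap : need t ≤ a·y / a·u
          have haAp : a ∈ Ap := Finset.mem_filter.2 ⟨ha, hau⟩
          have hay : 0 ≤ dotL a y := hp a haAp
          have hrx : 0 ≤ dotL (dotL a u • q₀ - dotL q₀ u • a) y := by
            apply hr
            simp only [hR, Finset.mem_image, Finset.mem_product]
            exact ⟨(a, q₀), ⟨haAp, hq₀⟩, rfl⟩
          rw [dotL_sub_left, dotL_smul_left, dotL_smul_left] at hrx
          have key : dotL q₀ y / dotL q₀ u ≤ dotL a y / dotL a u :=
            div_le_div_neg_pos hq₀u hau (by linarith)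
          have ht' : t ≤ dotL a y / dotL a u := by
            apply max_le _ key
            exact div_nonneg hay hau.le
          calc t * dotL a u ≤ (dotL a y / dotL a u) * dotL a u :=
                mul_le_mul_of_nonneg_right ht' hau.le
            _ = dotL a y := div_mul_cancel₀ _ hau.ne'
      · refine ⟨y, ?_, 0, le_rfl, by simp⟩
        intro a ha
        rcases lt_trichotomy (dotL a u) 0 with hau | hau | hau
        · exact absurd ⟨a, Finset.mem_filter.2 ⟨ha, hau⟩⟩ hAnne
        · exact h0 a (Finset.mem_filter.2 ⟨ha, hau⟩)
        · exact hp a (Finset.mem_filter.2 ⟨ha, hau⟩)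

theorem minkowski (A : Finset (Fin n → ℚ)) : ∃ T : Finset (Fin n → ℚ), PCone A = ConeGen ↑T := by
  obtain ⟨B, hB⟩ := weyl A
  refine ⟨B, Set.Subset.antisymm ?_ ?_⟩
  · intro x hx
    by_contra hxB
    obtain ⟨C, hC⟩ := weyl B
    have hxC : x ∉ PCone C := by rwa [← hC]
    simp only [PCone, Set.mem_setOf_eq, not_forall] at hxC
    obtain ⟨c, hcC, hcx⟩ := hxC
    push_neg at hcx
    have hcB : c ∈ PCone B := by
      intro b hb
      rw [dotL_comm]
      have : b ∈ PCone C := by rw [← hC]; exact subset_coneGen (by exact_mod_cast hb)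
      exact this c hcC
    rw [← hB] at hcB
    have : 0 ≤ dotL x c := coneGen_nonneg (fun a ha => by
      rw [dotL_comm]; exact hx a (by exact_mod_cast ha)) hcB
    rw [dotL_comm] at this
    linarith
  · intro x hx a ha
    refine coneGen_nonneg (m := dotL a) (fun b hb => ?_) hx
    rw [dotL_comm]
    have haB : a ∈ PCone B := by
      rw [← hB]; exact subset_coneGen (by exact_mod_cast ha)
    exact haB b hb
end QfAux

namespace QfAux
variable {n : ℕ}

theorem isPolyCone_inter {σ σ' : Set (Fin n → ℚ)} (h : IsPolyCone σ) (h' : IsPolyCone σ') :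
    IsPolyCone (σ ∩ σ') := by
  obtain ⟨T, rfl⟩ := h
  obtain ⟨T', rfl⟩ := h'
  obtain ⟨A, hA⟩ := weyl T
  obtain ⟨A', hA'⟩ := weyl T'
  obtain ⟨S, hS⟩ := minkowski (A ∪ A')
  exact ⟨S, by rw [hA, hA', ← PCone_union, hS]⟩

theorem isFace_refl {σ : Set (Fin n → ℚ)} : IsFace σ σ :=
  ⟨0, by simp, by simp⟩

theorem isFace_subset {σ τ : Set (Fin n → ℚ)} (h : IsFace σ τ) : τ ⊆ σ := by
  obtain ⟨m, hm, rfl⟩ := h; exact Set.inter_subset_left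

/-- a face of a polyhedral cone is itself generated by the generators on which the
functional vanishes -/
theorem face_eq_coneGen {T : Finset (Fin n → ℚ)} {m : (Fin n → ℚ) →ₗ[ℚ] ℚ}
    (hm : ∀ x ∈ ConeGen (↑T : Set (Fin n → ℚ)), 0 ≤ m x) :
    ConeGen (↑T : Set (Fin n → ℚ)) ∩ {x | m x = 0} =
      ConeGen (↑(T.filter (fun v => m v = 0)) : Set (Fin n → ℚ)) := by
  classical
  rw [coneGen_inter_ker (fun v hv => hm v (subset_coneGen hv))]
  have : ((↑T : Set (Fin n → ℚ)) ∩ {x | m x = 0}) =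
      (↑(T.filter (fun v => m v = 0)) : Set (Fin n → ℚ)) := by
    ext v; simp [Finset.mem_filter]
  rw [this]

/-- transitivity: a face of a face of a polyhedral cone is a face. -/
theorem face_trans {T : Finset (Fin n → ℚ)} {f g : Set (Fin n → ℚ)}
    (hf : IsFace (ConeGen (↑T : Set (Fin n → ℚ))) f) (hg : IsFace f g) :
    IsFace (ConeGen (↑T : Set (Fin n → ℚ))) g := by
  classical
  set σ := ConeGen (↑T : Set (Fin n → ℚ)) with hσ
  obtain ⟨m, hm, hfeq⟩ := hf
  obtain ⟨m', hm', hgeq⟩ := hg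
  set N : ℚ := 1 + ∑ v ∈ T, max 0 (-(m' v) / m v) with hN
  have hterm : ∀ v ∈ T, (0:ℚ) ≤ max 0 (-(m' v) / m v) := fun v _ => le_max_left _ _
  have hNv : ∀ v ∈ T, 0 < m v → 0 < N * m v + m' v := by
    intro v hv hmv
    have h1 : -(m' v) / m v ≤ ∑ w ∈ T, max 0 (-(m' w) / m w) :=
      le_trans (le_max_right _ _) (Finset.single_le_sum hterm hv)
    have h2 : -(m' v) / m v < N := by rw [hN]; linarith
    have := (div_lt_iff₀ hmv).1 h2
    linarith
  refine ⟨N • m + m', ?_, ?_⟩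
  · -- nonneg on σ
    intro x hx
    refine coneGen_nonneg (fun v hv => ?_) hx
    have hv' : v ∈ σ := subset_coneGen hv
    simp only [LinearMap.add_apply, LinearMap.smul_apply, smul_eq_mul]
    rcases (hm v hv').lt_or_eq with hmv | hmv
    · exact (hNv v hv hmv).le
    · have hvf : v ∈ f := by rw [hfeq]; exact ⟨hv', hmv.symm⟩
      have := hm' v hvf
      rw [← hmv]; simpa using this
  · -- g = σ ∩ ker
    have hfT : f = ConeGen (↑(T.filter (fun v => m v = 0)) : Set (Fin n → ℚ)) := by
      rw [hfeq, hσ, face_eq_coneGen hm]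
    have hfsub : (↑(T.filter (fun v => m v = 0)) : Set (Fin n → ℚ)) ⊆ f := by
      rw [hfT]; exact subset_coneGen
    have hgT : g = ConeGen (↑((T.filter (fun v => m v = 0)).filter (fun v => m' v = 0)) :
        Set (Fin n → ℚ)) := by
      rw [hgeq, hfT]
      rw [face_eq_coneGen (fun x hx => hm' x (by rw [hfT]; exact hx))]
    apply Set.Subset.antisymm
    · -- g ⊆ σ ∩ ker
      intro x hxg
      have hxf : x ∈ f := isFace_subset ⟨m', hm', hgeq⟩ hxg
      have hxσ : x ∈ σ := by rw [hfeq] at hxf; exact hxf.1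
      have hxm : m x = 0 := by rw [hfeq] at hxf; exact hxf.2
      have hxm' : m' x = 0 := by rw [hgeq] at hxg; exact hxg.2
      refine ⟨hxσ, ?_⟩
      simp only [Set.mem_setOf_eq, LinearMap.add_apply, LinearMap.smul_apply, smul_eq_mul,
        hxm, hxm', mul_zero, add_zero]
    · -- σ ∩ ker ⊆ g
      rintro x ⟨hxσ, hx0⟩
      simp only [Set.mem_setOf_eq, LinearMap.add_apply, LinearMap.smul_apply,
        smul_eq_mul] at hx0
      -- decompose x
      obtain ⟨s, c, hs, hc, rfl⟩ := hxσ
      have hsum : ∑ v ∈ s, c v * (N * m v + m' v) = 0 := by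
        have : (N • m + m') (∑ v ∈ s, c v • v) = 0 := hx0
        rw [map_sum] at this
        rw [← this]
        refine Finset.sum_congr rfl fun v hv => ?_
        simp [mul_comm]
      have hnn : ∀ v ∈ s, 0 ≤ c v * (N * m v + m' v) := by
        intro v hv
        have hvT : v ∈ T := by exact_mod_cast hs hv
        have hvσ : v ∈ σ := subset_coneGen (hs hv)
        rcases (hm v hvσ).lt_or_eq with hmv | hmv
        · exact mul_nonneg (hc v) (hNv v hvT hmv).le
        · have hvf : v ∈ f := by rw [hfeq]; exact ⟨hvσ, hmv.symm⟩
          have := hm' v hvf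
          apply mul_nonneg (hc v); rw [← hmv]; simpa using this
      have hzero := (Finset.sum_eq_zero_iff_of_nonneg hnn).1 hsum
      rw [hgT]
      refine ⟨s.filter (fun v => m v = 0 ∧ m' v = 0), c, ?_, hc, ?_⟩
      · intro v hv
        simp only [Finset.coe_filter, Set.mem_setOf_eq] at hv
        simp only [Finset.coe_filter, Set.mem_setOf_eq, Finset.mem_filter]
        exact ⟨⟨by exact_mod_cast hs hv.1, hv.2.1⟩, hv.2.2⟩
      · rw [Finset.sum_filter]
        refine Finset.sum_congr rfl fun v hv => ?_
        by_cases hv0 : c v = 0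
        · simp [hv0]
        · have hvT : v ∈ T := by exact_mod_cast hs hv
          have hvσ : v ∈ σ := subset_coneGen (hs hv)
          have h2 : N * m v + m' v = 0 := by
            rcases mul_eq_zero.1 (hzero v hv) with h | h
            · exact absurd h hv0
            · exact h
          have hmv : m v = 0 := by
            rcases (hm v hvσ).lt_or_eq with hmv | hmv
            · exact absurd h2 (hNv v hvT hmv).ne'
            · exact hmv.symm
          have hmv' : m' v = 0 := by rw [hmv] at h2; linarith
          simp [hmv, hmv']

end QfAux

namespace QfAux
variable {n : ℕ}

/-- the minimal face of a polyhedral cone through a point, with its key properties. -/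
theorem exists_minFace {T : Finset (Fin n → ℚ)} {x : Fin n → ℚ}
    (hx : x ∈ ConeGen (↑T : Set (Fin n → ℚ))) :
    ∃ f : Set (Fin n → ℚ), IsFace (ConeGen (↑T : Set (Fin n → ℚ))) f ∧ IsPolyCone f ∧ x ∈ f ∧
      (∀ g, IsFace (ConeGen (↑T : Set (Fin n → ℚ))) g → x ∈ g → f ⊆ g) ∧
      (∀ μ : (Fin n → ℚ) →ₗ[ℚ] ℚ, (∀ z ∈ f, 0 ≤ μ z) → μ x = 0 → ∀ z ∈ f, μ z = 0) := by
  classical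
  set σ := ConeGen (↑T : Set (Fin n → ℚ)) with hσ
  set P : Finset (Finset (Fin n → ℚ)) :=
    T.powerset.filter (fun S => IsFace σ (ConeGen (↑S : Set (Fin n → ℚ))) ∧
      x ∈ ConeGen (↑S : Set (Fin n → ℚ))) with hP
  set mfun : Finset (Fin n → ℚ) → ((Fin n → ℚ) →ₗ[ℚ] ℚ) :=
    fun S => if h : IsFace σ (ConeGen (↑S : Set (Fin n → ℚ))) then h.choose else 0 with hmfun
  have mfun_nonneg : ∀ S ∈ P, ∀ z ∈ σ, 0 ≤ mfun S z := by
    intro S hS z hz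
    have h := (Finset.mem_filter.1 hS).2.1
    rw [hmfun]; simp only [dif_pos h]
    exact h.choose_spec.1 z hz
  have mfun_face : ∀ S ∈ P, ConeGen (↑S : Set (Fin n → ℚ)) = σ ∩ {z | mfun S z = 0} := by
    intro S hS
    have h := (Finset.mem_filter.1 hS).2.1
    rw [hmfun]; simp only [dif_pos h]
    exact h.choose_spec.2
  set M : (Fin n → ℚ) →ₗ[ℚ] ℚ := ∑ S ∈ P, mfun S with hM
  have hMapp : ∀ z, M z = ∑ S ∈ P, mfun S z := by
    intro z; rw [hM]; exact LinearMap.sum_apply _ _ _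
  have hMnn : ∀ z ∈ σ, 0 ≤ M z := by
    intro z hz; rw [hMapp]
    exact Finset.sum_nonneg fun S hS => mfun_nonneg S hS z hz
  have hMx : M x = 0 := by
    rw [hMapp]
    refine Finset.sum_eq_zero fun S hS => ?_
    have hxS := (Finset.mem_filter.1 hS).2.2
    rw [mfun_face S hS] at hxS
    exact hxS.2
  set f := σ ∩ {z | M z = 0} with hf
  have hface : IsFace σ f := ⟨M, hMnn, rfl⟩
  have hmin : ∀ g, IsFace σ g → x ∈ g → f ⊆ g := by
    intro g hg hxg
    obtain ⟨m, hm, hgeq⟩ := hg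
    set S₀ := T.filter (fun v => m v = 0) with hS₀
    have hgS : g = ConeGen (↑S₀ : Set (Fin n → ℚ)) := by
      rw [hgeq, hσ, face_eq_coneGen hm]
    have hS₀P : S₀ ∈ P := by
      refine Finset.mem_filter.2 ⟨Finset.mem_powerset.2 (Finset.filter_subset _ _), ?_, ?_⟩
      · rw [← hgS]; exact ⟨m, hm, hgeq⟩
      · rw [← hgS]; exact hxg
    intro z hz
    obtain ⟨hzσ, hzM⟩ := hz
    have habs : ∀ S ∈ P, mfun S z = 0 := by
      intro S hS
      have := (Finset.sum_eq_zero_iff_of_nonneg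
        (fun S hS => mfun_nonneg S hS z hzσ)).1 (by rw [← hMapp]; exact hzM)
      exact this S hS
    have : z ∈ ConeGen (↑S₀ : Set (Fin n → ℚ)) := by
      rw [mfun_face S₀ hS₀P]
      exact ⟨hzσ, habs S₀ hS₀P⟩
    rwa [hgS]
  refine ⟨f, hface, ?_, ⟨hx, hMx⟩, hmin, ?_⟩
  · rw [hf, hσ, face_eq_coneGen hMnn]
    exact ⟨_, rfl⟩
  · intro μ hμ hμx z hz
    have hface' : IsFace f (f ∩ {z | μ z = 0}) := ⟨μ, hμ, rfl⟩
    have : IsFace σ (f ∩ {z | μ z = 0}) := face_trans hface hface'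
    have hsub := hmin _ this ⟨⟨hx, hMx⟩, hμx⟩
    exact (hsub hz).2

/-- relative interior points admit backward perturbations. -/
theorem exists_eps_sub_mem {S : Finset (Fin n → ℚ)} {x y : Fin n → ℚ}
    (hx : x ∈ ConeGen (↑S : Set (Fin n → ℚ))) (hy : y ∈ ConeGen (↑S : Set (Fin n → ℚ)))
    (hint : ∀ μ : (Fin n → ℚ) →ₗ[ℚ] ℚ,
      (∀ z ∈ ConeGen (↑S : Set (Fin n → ℚ)), 0 ≤ μ z) → μ x = 0 →
      ∀ z ∈ ConeGen (↑S : Set (Fin n → ℚ)), μ z = 0) :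
    ∃ ε : ℚ, 0 < ε ∧ x - ε • y ∈ ConeGen (↑S : Set (Fin n → ℚ)) := by
  classical
  obtain ⟨A, hA⟩ := weyl S
  have key : ∀ a ∈ A, 0 < dotL a y → 0 < dotL a x := by
    intro a ha hay
    rcases ((by rw [hA] at hx; exact hx a ha : (0:ℚ) ≤ dotL a x)).lt_or_eq with h | h
    · exact h
    · exfalso
      have := hint (dotL a) (fun z hz => by rw [hA] at hz; exact hz a ha) h.symm y hy
      rw [this] at hay; exact lt_irrefl 0 hay
  set Ap := A.filter (fun a => 0 < dotL a y) with hAp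
  by_cases hne : Ap.Nonempty
  · obtain ⟨a₀, ha₀, ha₀min⟩ :=
      Finset.exists_min_image Ap (fun a => dotL a x / dotL a y) hne
    have ha₀y := (Finset.mem_filter.1 ha₀).2
    have ha₀x := key a₀ (Finset.mem_filter.1 ha₀).1 ha₀y
    refine ⟨dotL a₀ x / dotL a₀ y, div_pos ha₀x ha₀y, ?_⟩
    rw [hA]
    intro a ha
    have lin : dotL a (x - (dotL a₀ x / dotL a₀ y) • y)
        = dotL a x - (dotL a₀ x / dotL a₀ y) * dotL a y := by
      rw [map_sub, map_smul]; rfl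
    rw [lin, sub_nonneg]
    rcases le_or_gt (dotL a y) 0 with hay | hay
    · have hax : 0 ≤ dotL a x := by rw [hA] at hx; exact hx a ha
      have : (dotL a₀ x / dotL a₀ y) * dotL a y ≤ 0 :=
        mul_nonpos_of_nonneg_of_nonpos (div_pos ha₀x ha₀y).le hay
      linarith
    · have hmin := ha₀min a (Finset.mem_filter.2 ⟨ha, hay⟩)
      calc (dotL a₀ x / dotL a₀ y) * dotL a y ≤ (dotL a x / dotL a y) * dotL a y :=
            mul_le_mul_of_nonneg_right hmin hay.le
        _ = dotL a x := div_mul_cancel₀ _ hay.ne'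
  · refine ⟨1, one_pos, ?_⟩
    rw [hA]
    intro a ha
    have lin : dotL a (x - (1:ℚ) • y) = dotL a x - dotL a y := by
      rw [map_sub, map_smul]; simp
    rw [lin, sub_nonneg]
    have hay : dotL a y ≤ 0 := by
      by_contra h
      exact hne ⟨a, Finset.mem_filter.2 ⟨ha, lt_of_not_ge h⟩⟩
    have hax : 0 ≤ dotL a x := by rw [hA] at hx; exact hx a ha
    linarith

end QfAux

namespace QfAux
variable {n : ℕ}

theorem coneDim_coneGen (S : Finset (Fin n → ℚ)) :
    coneDim (ConeGen (↑S : Set (Fin n → ℚ))) =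
      Module.finrank ℚ (Submodule.span ℚ (↑S : Set (Fin n → ℚ))) := by
  unfold coneDim; rw [span_coneGen]

theorem exists_facet_between {T : Finset (Fin n → ℚ)} {g : Set (Fin n → ℚ)}
    (hg : IsFace (ConeGen (↑T : Set (Fin n → ℚ))) g)
    (hne : g ≠ ConeGen (↑T : Set (Fin n → ℚ))) :
    ∃ f, IsFacet (ConeGen (↑T : Set (Fin n → ℚ))) f ∧ IsFace f g := by
  classical
  set σ := ConeGen (↑T : Set (Fin n → ℚ)) with hσdef
  set W := Submodule.span ℚ (↑T : Set (Fin n → ℚ)) with hW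
  obtain ⟨mg, hmg, hgeq⟩ := hg
  set 𝒮 : Set (Finset (Fin n → ℚ)) :=
    {S | S ⊆ T ∧ IsFace σ (ConeGen (↑S : Set (Fin n → ℚ))) ∧
      ConeGen (↑S : Set (Fin n → ℚ)) ≠ σ ∧ g ⊆ ConeGen (↑S : Set (Fin n → ℚ))} with h𝒮
  have hfin : 𝒮.Finite := by
    apply Set.Finite.subset (T.powerset : Finset (Finset (Fin n → ℚ))).finite_toSet
    intro S hS
    simp only [Finset.coe_powerset, Set.mem_preimage, Set.mem_powerset_iff]
    exact_mod_cast hS.1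
  have hSg : T.filter (fun v => mg v = 0) ∈ 𝒮 := by
    have hgS : g = ConeGen (↑(T.filter (fun v => mg v = 0)) : Set (Fin n → ℚ)) := by
      rw [hgeq, hσdef, face_eq_coneGen hmg]
    exact ⟨Finset.filter_subset _ _, by rw [← hgS]; exact ⟨mg, hmg, hgeq⟩,
      by rw [← hgS]; exact hne, by rw [← hgS]⟩
  obtain ⟨S, hS, hSmax⟩ :=
    Set.Finite.exists_maximalFor Finset.card 𝒮 hfin ⟨_, hSg⟩
  obtain ⟨hST, hSface, hSne, hSg'⟩ := hS
  obtain ⟨m, hm, hfeq⟩ := hSface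
  set f := ConeGen (↑S : Set (Fin n → ℚ)) with hfdef
  -- replace S by the full filter
  have hfT : f = ConeGen (↑(T.filter (fun v => m v = 0)) : Set (Fin n → ℚ)) := by
    rw [hfeq, hσdef, face_eq_coneGen hm]
  have hSsub : S ⊆ T.filter (fun v => m v = 0) := by
    intro v hv
    refine Finset.mem_filter.2 ⟨hST hv, ?_⟩
    have : v ∈ f := subset_coneGen (by exact_mod_cast hv)
    rw [hfeq] at this; exact this.2
  have hSfull : S = T.filter (fun v => m v = 0) := by
    apply Finset.eq_of_subset_of_card_le hSsub
    have : T.filter (fun v => m v = 0) ∈ 𝒮 :=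
      ⟨Finset.filter_subset _ _, by rw [← hfT]; exact ⟨m, hm, hfeq⟩,
        by rw [← hfT]; exact hSne, by rw [← hfT]; exact hSg'⟩
    exact hSmax this (Finset.card_le_card hSsub)
  have hkey : ∀ v ∈ T, m v = 0 → v ∈ S := by
    intro v hv hmv; rw [hSfull]; exact Finset.mem_filter.2 ⟨hv, hmv⟩
  set U := Submodule.span ℚ (↑S : Set (Fin n → ℚ)) with hU
  -- m does not vanish identically on T
  have hmT : ∃ v ∈ T, m v ≠ 0 := by
    by_contra h
    push_neg at h
    apply hSne
    rw [hfeq]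
    apply Set.Subset.antisymm Set.inter_subset_left
    intro x hx
    exact ⟨hx, coneGen_eq_zero (fun v hv => h v (by exact_mod_cast hv)) hx⟩
  obtain ⟨v₀, hv₀T, hv₀m⟩ := hmT
  set W₀ := W ⊓ LinearMap.ker m with hW₀
  have hWfin : FiniteDimensional ℚ W := inferInstance
  -- finrank W₀ + 1 = finrank W
  have hrank : Module.finrank ℚ W₀ + 1 = Module.finrank ℚ W := by
    have hres : LinearMap.range (m.domRestrict W) = ⊤ := by
      rw [LinearMap.range_eq_top]
      intro c
      have hv₀W : v₀ ∈ W := Submodule.subset_span (by exact_mod_cast hv₀T)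
      refine ⟨(c / m v₀) • ⟨v₀, hv₀W⟩, ?_⟩
      simp only [LinearMap.domRestrict_apply, Submodule.coe_smul, SetLike.val_smul,
        smul_eq_mul, map_smul]
      field_simp
    have hker : (LinearMap.ker (m.domRestrict W)).map W.subtype = W₀ := by
      ext x
      simp only [Submodule.mem_map, LinearMap.mem_ker, LinearMap.domRestrict_apply,
        Submodule.mem_inf, hW₀]
      constructor
      · rintro ⟨⟨y, hy⟩, h1, rfl⟩; exact ⟨hy, h1⟩
      · rintro ⟨h1, h2⟩; exact ⟨⟨x, h1⟩, h2, rfl⟩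
    have := LinearMap.finrank_range_add_finrank_ker (m.domRestrict W)
    rw [hres, finrank_top] at this
    have h1 : Module.finrank ℚ (LinearMap.ker (m.domRestrict W)) = Module.finrank ℚ W₀ := by
      rw [← hker, Submodule.finrank_map_subtype_eq]
    rw [Module.finrank_self] at this
    omega
  have hUW₀ : U ≤ W₀ := by
    rw [hW₀]
    refine le_inf (Submodule.span_mono (by exact_mod_cast hST) : U ≤ W) ?_
    rw [hU, Submodule.span_le]
    intro v hv
    simp only [SetLike.mem_coe, LinearMap.mem_ker]
    have : v ∈ f := subset_coneGen hv
    rw [hfeq] at this; exact this.2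
  -- key dimension claim
  have hdim : Module.finrank ℚ U = Module.finrank ℚ W₀ := by
    by_contra hlt
    have hlt : Module.finrank ℚ U < Module.finrank ℚ W₀ :=
      lt_of_le_of_ne (Submodule.finrank_mono hUW₀) hlt
    have hUltW₀ : U < W₀ := lt_of_le_of_ne hUW₀ (by intro h; rw [h] at hlt; exact lt_irrefl _ hlt)
    obtain ⟨w, hwW₀, hwU⟩ := SetLike.exists_of_lt hUltW₀
    obtain ⟨μ₀, hμ₀w, hμ₀U⟩ := Submodule.exists_dual_map_eq_bot_of_notMem hwU inferInstance
    have hμ₀U' : ∀ u ∈ U, μ₀ u = 0 := by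
      intro u hu
      have : μ₀ u ∈ U.map μ₀ := ⟨u, hu, rfl⟩
      rw [hμ₀U] at this
      exact (Submodule.mem_bot ℚ).1 this
    -- choose sign so that μ is negative somewhere on T
    have hsign : ∃ μ : (Fin n → ℚ) →ₗ[ℚ] ℚ, μ w ≠ 0 ∧ (∀ u ∈ U, μ u = 0) ∧
        ∃ v ∈ T, μ v < 0 := by
      have hex : ∃ v ∈ T, μ₀ v ≠ 0 := by
        by_contra h
        push_neg at h
        have : ∀ x ∈ W, μ₀ x = 0 := by
          intro x hx
          have hle : W ≤ LinearMap.ker μ₀ := by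
            rw [hW, Submodule.span_le]
            intro v hv
            simp only [SetLike.mem_coe, LinearMap.mem_ker]
            exact h v (by exact_mod_cast hv)
          exact hle hx
        exact hμ₀w (this w (hwW₀.1))
      obtain ⟨v, hvT, hvne⟩ := hex
      rcases hvne.lt_or_gt with hneg | hpos
      · exact ⟨μ₀, hμ₀w, hμ₀U', v, hvT, hneg⟩
      · refine ⟨-μ₀, by simpa using hμ₀w, fun u hu => by simp [hμ₀U' u hu], v, hvT, by
          simpa using hpos⟩
    obtain ⟨μ, hμw, hμU, v₂, hv₂T, hv₂μ⟩ := hsign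
    set Tneg := T.filter (fun v => μ v < 0) with hTneg
    have hTnegne : Tneg.Nonempty := ⟨v₂, Finset.mem_filter.2 ⟨hv₂T, hv₂μ⟩⟩
    have hTnegm : ∀ v ∈ Tneg, 0 < m v := by
      intro v hv
      obtain ⟨hvT, hvμ⟩ := Finset.mem_filter.1 hv
      rcases (hm v (subset_coneGen (by exact_mod_cast hvT))).lt_or_eq with h | h
      · exact h
      · exfalso
        have hvS : v ∈ S := hkey v hvT h.symm
        have : μ v = 0 := hμU v (Submodule.subset_span (by exact_mod_cast hvS))
        rw [this] at hvμ; exact lt_irrefl 0 hvμ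
    obtain ⟨v₁, hv₁, hv₁min⟩ :=
      Finset.exists_min_image Tneg (fun v => m v / (-μ v)) hTnegne
    have hv₁μ := (Finset.mem_filter.1 hv₁).2
    have hv₁m := hTnegm v₁ hv₁
    set t : ℚ := m v₁ / (-μ v₁) with ht
    have htpos : 0 < t := div_pos hv₁m (by linarith)
    set m' := m + t • μ with hm'
    have hm'T : ∀ v ∈ T, 0 ≤ m' v := by
      intro v hv
      simp only [hm', LinearMap.add_apply, LinearMap.smul_apply, smul_eq_mul]
      rcases le_or_gt 0 (μ v) with hμv | hμv
      · have := hm v (subset_coneGen (by exact_mod_cast hv))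
        nlinarith
      · have hvneg : v ∈ Tneg := Finset.mem_filter.2 ⟨hv, hμv⟩
        have hmin := hv₁min v hvneg
        have hmv := hTnegm v hvneg
        have h1 : t ≤ m v / (-μ v) := hmin
        have h2 : t * (-μ v) ≤ m v := by
          rw [div_eq_mul_inv] at h1  -- t ≤ m v * (-μ v)⁻¹
          have := mul_le_mul_of_nonneg_right h1 (by linarith : (0:ℚ) ≤ -μ v)
          rwa [mul_assoc, inv_mul_cancel₀ (by linarith : -μ v ≠ 0), mul_one] at this
        linarith
    have hm'σ : ∀ x ∈ σ, 0 ≤ m' x := fun x hx =>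
      coneGen_nonneg (fun v hv => hm'T v (by exact_mod_cast hv)) hx
    have hm'v₁ : m' v₁ = 0 := by
      simp only [hm', LinearMap.add_apply, LinearMap.smul_apply, smul_eq_mul, ht]
      have hne : μ v₁ ≠ 0 := hv₁μ.ne
      field_simp
      ring
    set f' := σ ∩ {x | m' x = 0} with hf'
    set S' := T.filter (fun v => m' v = 0) with hS'
    have hf'S' : f' = ConeGen (↑S' : Set (Fin n → ℚ)) := by
      rw [hf', hσdef, face_eq_coneGen hm'σ]
    have hf'ne : f' ≠ σ := by
      intro h
      have hTker : ∀ v ∈ T, m' v = 0 := by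
        intro v hv
        have : v ∈ f' := by rw [h]; exact subset_coneGen (by exact_mod_cast hv)
        exact this.2
      have hWker : W ≤ LinearMap.ker m' := by
        rw [hW, Submodule.span_le]
        intro v hv
        simp only [SetLike.mem_coe, LinearMap.mem_ker]
        exact hTker v (by exact_mod_cast hv)
      have hw' : m' w = 0 := hWker hwW₀.1
      have hmw : m w = 0 := hwW₀.2
      simp only [hm', LinearMap.add_apply, LinearMap.smul_apply, smul_eq_mul, hmw,
        zero_add] at hw'
      rcases mul_eq_zero.1 hw' with h' | h'
      · exact htpos.ne' h'
      · exact hμw h'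
    have hgf' : g ⊆ f' := by
      intro z hz
      have hzf : z ∈ f := hSg' hz
      have hzU : z ∈ U := coneGen_subset_span hzf
      have hzμ : μ z = 0 := hμU z hzU
      have hzm : m z = 0 := by rw [hfeq] at hzf; exact hzf.2
      have hzσ : z ∈ σ := by rw [hfeq] at hzf; exact hzf.1
      refine ⟨hzσ, ?_⟩
      simp [hm', hzμ, hzm]
    have hS'𝒮 : S' ∈ 𝒮 := by
      refine ⟨Finset.filter_subset _ _, by rw [← hf'S']; exact ⟨m', hm'σ, hf'⟩,
        by rw [← hf'S']; exact hf'ne, by rw [← hf'S']; exact hgf'⟩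
    have hSS' : S ⊆ S' := by
      intro v hv
      have hvT : v ∈ T := hST hv
      have hvm : m v = 0 := by
        have : v ∈ f := subset_coneGen (by exact_mod_cast hv)
        rw [hfeq] at this; exact this.2
      have hvμ : μ v = 0 := hμU v (Submodule.subset_span (by exact_mod_cast hv))
      refine Finset.mem_filter.2 ⟨hvT, ?_⟩
      simp [hm', hvm, hvμ]
    have hv₁S' : v₁ ∈ S' := Finset.mem_filter.2 ⟨(Finset.mem_filter.1 hv₁).1, hm'v₁⟩
    have hv₁S : v₁ ∉ S := by
      intro h
      have : μ v₁ = 0 := hμU v₁ (Submodule.subset_span (by exact_mod_cast h))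
      rw [this] at hv₁μ; exact lt_irrefl 0 hv₁μ
    have hcard : S.card < S'.card :=
      Finset.card_lt_card (Finset.ssubset_iff_of_subset hSS' |>.2 ⟨v₁, hv₁S', hv₁S⟩)
    have := hSmax hS'𝒮 hcard.le
    omega
  -- conclude
  have hfacet : IsFacet σ f := by
    refine ⟨⟨m, hm, hfeq⟩, ?_⟩
    have h1 : coneDim f = Module.finrank ℚ U := coneDim_coneGen S
    have h2 : coneDim σ = Module.finrank ℚ W := coneDim_coneGen T
    rw [h1, h2, hdim, hrank]
  refine ⟨f, hfacet, mg, fun x hx => hmg x ((isFace_subset ⟨m, hm, hfeq⟩) hx), ?_⟩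
  apply Set.Subset.antisymm
  · intro z hz
    exact ⟨hSg' hz, by rw [hgeq] at hz; exact hz.2⟩
  · rintro z ⟨hzf, hzm⟩
    rw [hgeq]
    exact ⟨(isFace_subset ⟨m, hm, hfeq⟩) hzf, hzm⟩

/-- In a facet-closed family of polyhedral cones, every face of a member is a member. -/
theorem faces_mem {F : Set (Set (Fin n → ℚ))} (hpoly : ∀ σ ∈ F, IsPolyCone σ)
    (hclos : ∀ σ ∈ F, ∀ τ, IsFacet σ τ → τ ∈ F) :
    ∀ σ ∈ F, ∀ g, IsFace σ g → g ∈ F := by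
  suffices h : ∀ k : ℕ, ∀ σ ∈ F, coneDim σ ≤ k → ∀ g, IsFace σ g → g ∈ F by
    intro σ hσ g hg
    exact h (coneDim σ) σ hσ le_rfl g hg
  intro k
  induction k with
  | zero =>
    intro σ hσ hdim g hg
    by_cases hgσ : g = σ
    · rwa [hgσ]
    obtain ⟨T, hT⟩ := hpoly σ hσ
    subst hT
    obtain ⟨f, hfacet, _⟩ := exists_facet_between hg hgσ
    have := hfacet.2
    omega
  | succ k IH =>
    intro σ hσ hdim g hg
    by_cases hgσ : g = σ
    · rwa [hgσ]
    obtain ⟨T, hT⟩ := hpoly σ hσ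
    subst hT
    obtain ⟨f, hfacet, hfg⟩ := exists_facet_between hg hgσ
    have hfF : f ∈ F := hclos _ hσ f hfacet
    have h2 := hfacet.2
    have : coneDim f ≤ k := by omega
    exact IH f hfF this g hfg

end QfAux

namespace QfAux
variable {n : ℕ}

/-- Every face of an intersection of cones of two quasifans is an intersection of
members of the quasifans. -/
theorem face_of_inter_mem {F F' : Set (Set (Fin n → ℚ))}
    (hF : IsQuasifan F) (hF' : IsQuasifan F') {σ σ' υ : Set (Fin n → ℚ)}
    (hσ : σ ∈ F) (hσ' : σ' ∈ F') (hυ : IsFace (σ ∩ σ') υ) :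
    ∃ ρ ∈ F, ∃ ρ' ∈ F', υ = ρ ∩ ρ' := by
  classical
  obtain ⟨T₂, hT₂⟩ := isPolyCone_inter (hF.2.1 σ hσ) (hF'.2.1 σ' hσ')
  obtain ⟨m, hm, hυeq⟩ := hυ
  have hυcone : υ = ConeGen (↑(T₂.filter (fun v => m v = 0)) : Set (Fin n → ℚ)) := by
    rw [hυeq, hT₂, face_eq_coneGen (by rw [← hT₂]; exact hm)]
  set U := T₂.filter (fun v => m v = 0) with hU
  set x₀ : Fin n → ℚ := ∑ v ∈ U, v with hx₀
  have hx₀υ : x₀ ∈ υ := by rw [hυcone]; exact sum_mem_coneGen (by exact rfl.subset)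
  have hx₀τ : x₀ ∈ σ ∩ σ' := by rw [hυeq] at hx₀υ; exact hx₀υ.1
  have hUυ : (↑U : Set (Fin n → ℚ)) ⊆ υ := by rw [hυcone]; exact subset_coneGen
  -- the relative-interior property of x₀ in υ
  have hR : ∀ μ : (Fin n → ℚ) →ₗ[ℚ] ℚ, (∀ z ∈ σ ∩ σ', 0 ≤ μ z) → μ x₀ = 0 →
      ∀ z ∈ υ, μ z = 0 := by
    intro μ hμ hμx z hz
    have hsum : ∑ v ∈ U, μ v = 0 := by rw [← map_sum]; exact hμx
    have hnn : ∀ v ∈ U, 0 ≤ μ v := by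
      intro v hv
      have : v ∈ υ := hUυ (by exact_mod_cast hv)
      rw [hυeq] at this
      exact hμ v this.1
    have hek := (Finset.sum_eq_zero_iff_of_nonneg hnn).1 hsum
    rw [hυcone] at hz
    exact coneGen_eq_zero (fun v hv => hek v (by exact_mod_cast hv)) hz
  -- minimal faces of σ and σ' through x₀
  obtain ⟨Tσ, hTσ⟩ := hF.2.1 σ hσ
  obtain ⟨Tσ', hTσ'⟩ := hF'.2.1 σ' hσ'
  have hx₀σ : x₀ ∈ ConeGen (↑Tσ : Set (Fin n → ℚ)) := by rw [← hTσ]; exact hx₀τ.1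
  have hx₀σ' : x₀ ∈ ConeGen (↑Tσ' : Set (Fin n → ℚ)) := by rw [← hTσ']; exact hx₀τ.2
  obtain ⟨f, hfface, hfpoly, hx₀f, hfmin, hfint⟩ := exists_minFace hx₀σ
  obtain ⟨f', hf'face, hf'poly, hx₀f', hf'min, hf'int⟩ := exists_minFace hx₀σ'
  rw [← hTσ] at hfface hfmin
  rw [← hTσ'] at hf'face hf'min
  have hfsubσ : f ⊆ σ := isFace_subset hfface
  have hf'subσ' : f' ⊆ σ' := isFace_subset hf'face
  have main : υ = f ∩ f' := by
    apply Set.Subset.antisymm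
    · intro z hz
      obtain ⟨M, hM, hfeq⟩ := hfface
      obtain ⟨M', hM', hf'eq⟩ := hf'face
      have hMx₀ : M x₀ = 0 := by rw [hfeq] at hx₀f; exact hx₀f.2
      have hM'x₀ : M' x₀ = 0 := by rw [hf'eq] at hx₀f'; exact hx₀f'.2
      have h1 : M z = 0 := hR M (fun w hw => hM w hw.1) hMx₀ z hz
      have h2 : M' z = 0 := hR M' (fun w hw => hM' w hw.2) hM'x₀ z hz
      have hzτ : z ∈ σ ∩ σ' := by rw [hυeq] at hz; exact hz.1
      constructor
      · rw [hfeq]; exact ⟨hzτ.1, h1⟩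
      · rw [hf'eq]; exact ⟨hzτ.2, h2⟩
    · rintro y ⟨hyf, hyf'⟩
      obtain ⟨Sf, hSf⟩ := hfpoly
      obtain ⟨Sf', hSf'⟩ := hf'poly
      obtain ⟨ε, hε, hmem⟩ := exists_eps_sub_mem (by rw [← hSf]; exact hx₀f)
        (by rw [← hSf]; exact hyf)
        (fun μ h1 h2 => by
          rw [← hSf] at h1 ⊢
          exact fun z hz => hfint μ h1 h2 z hz)
      obtain ⟨ε', hε', hmem'⟩ := exists_eps_sub_mem (by rw [← hSf']; exact hx₀f')
        (by rw [← hSf']; exact hyf')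
        (fun μ h1 h2 => by
          rw [← hSf'] at h1 ⊢
          exact fun z hz => hf'int μ h1 h2 z hz)
      set ε'' := min ε ε' with hε''
      have hε''pos : 0 < ε'' := lt_min hε hε'
      have hzf : x₀ - ε'' • y ∈ f := by
        have : x₀ - ε'' • y = (x₀ - ε • y) + (ε - ε'') • y := by
          rw [sub_smul]; abel
        rw [this, hSf]
        exact add_mem_coneGen hmem
          (smul_mem_coneGen (by rw [← hSf]; exact hyf)
            (by rw [hε'']; simp [min_le_left]))
      have hzf' : x₀ - ε'' • y ∈ f' := by
        have : x₀ - ε'' • y = (x₀ - ε' • y) + (ε' - ε'') • y := by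
          rw [sub_smul]; abel
        rw [this, hSf']
        exact add_mem_coneGen hmem'
          (smul_mem_coneGen (by rw [← hSf']; exact hyf')
            (by rw [hε'']; simp [min_le_right]))
      have hzτ : x₀ - ε'' • y ∈ σ ∩ σ' := ⟨hfsubσ hzf, hf'subσ' hzf'⟩
      have hyτ : y ∈ σ ∩ σ' := ⟨hfsubσ hyf, hf'subσ' hyf'⟩
      have hmy : 0 ≤ m y := hm y hyτ
      have hmz : 0 ≤ m (x₀ - ε'' • y) := hm _ hzτ
      have hmx₀ : m x₀ = 0 := by rw [hυeq] at hx₀υ; exact hx₀υ.2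
      have hlin : m (x₀ - ε'' • y) = m x₀ - ε'' * m y := by
        rw [map_sub, map_smul]; rfl
      have hmy0 : m y = 0 := by
        rw [hlin, hmx₀] at hmz
        nlinarith
      rw [hυeq]
      exact ⟨hyτ, hmy0⟩
  refine ⟨f, ?_, f', ?_, main⟩
  · exact faces_mem hF.2.1 hF.2.2.1 σ hσ f hfface
  · exact faces_mem hF'.2.1 hF'.2.2.1 σ' hσ' f' hf'face

theorem exists_maximal_above {F : Set (Set (Fin n → ℚ))} (hfin : F.Finite)
    {σ : Set (Fin n → ℚ)} (hσ : σ ∈ F) :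
    ∃ σ₁ ∈ F, σ ⊆ σ₁ ∧ Maximal (· ∈ F) σ₁ := by
  obtain ⟨σ₁, hσ₁, hmax⟩ := Set.Finite.exists_maximalFor id {ρ ∈ F | σ ⊆ ρ}
    (hfin.subset (Set.sep_subset _ _)) ⟨σ, hσ, Set.Subset.rfl⟩
  refine ⟨σ₁, hσ₁.1, hσ₁.2, hσ₁.1, fun y hy hle => ?_⟩
  exact hmax ⟨hy, hσ₁.2.trans hle⟩ hle

end QfAux


/-- If `Ψ`, `Ψ'` are strictly convex piecewise linear functions adapted to complete
quasifans `F`, `F'` in `ℚ^n`, then for a suitable positive scaling `Ψ + λ Ψ'` is strictly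
convex with respect to the intersection quasifan; in particular, the intersection of two
finite projective quasifans is a projective quasifan. -/
theorem intersection_of_projective_quasifans {n : ℕ}
    (F F' : Set (Set (Fin n → ℚ))) (Ψ Ψ' : (Fin n → ℚ) → ℚ)
    (hF : IsQuasifan F) (hF' : IsQuasifan F')
    (hc : IsCompleteFan F) (hc' : IsCompleteFan F')
    (hΨ : IsStrictlyConvexPLOn F Ψ) (hΨ' : IsStrictlyConvexPLOn F' Ψ') :
    (∃ lam : ℚ, 0 < lam ∧
      IsStrictlyConvexPLOn {τ | ∃ σ ∈ F, ∃ σ' ∈ F', τ = σ ∩ σ'}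
        (fun x => Ψ x + lam * Ψ' x)) ∧
    IsQuasifan {τ | ∃ σ ∈ F, ∃ σ' ∈ F', τ = σ ∩ σ'} ∧
    IsProjectiveFan {τ | ∃ σ ∈ F, ∃ σ' ∈ F', τ = σ ∩ σ'} := by
  classical
  have hstrict : IsStrictlyConvexPLOn {τ | ∃ σ ∈ F, ∃ σ' ∈ F', τ = σ ∩ σ'}
      (fun x => Ψ x + 1 * Ψ' x) := by
    constructor
    · rintro τ ⟨σ, hσ, σ', hσ', rfl⟩
      obtain ⟨ℓ, hℓ⟩ := hΨ.1 σ hσ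
      obtain ⟨ℓ', hℓ'⟩ := hΨ'.1 σ' hσ'
      refine ⟨ℓ + ℓ', fun x hx => ?_⟩
      simp only [LinearMap.add_apply, hℓ x hx.1, hℓ' x hx.2, one_mul]
    · rintro τ ⟨σ, hσ, σ', hσ', rfl⟩ hmax
      obtain ⟨σ₁, hσ₁F, hσsub, hσ₁max⟩ := QfAux.exists_maximal_above hF.1 hσ
      obtain ⟨σ'₁, hσ'₁F, hσ'sub, hσ'₁max⟩ := QfAux.exists_maximal_above hF'.1 hσ'
      have hmem : σ₁ ∩ σ'₁ ∈ {τ | ∃ σ ∈ F, ∃ σ' ∈ F', τ = σ ∩ σ'} :=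
        ⟨σ₁, hσ₁F, σ'₁, hσ'₁F, rfl⟩
      have hsub : σ ∩ σ' ⊆ σ₁ ∩ σ'₁ := Set.inter_subset_inter hσsub hσ'sub
      have heq : σ ∩ σ' = σ₁ ∩ σ'₁ :=
        Set.Subset.antisymm hsub (hmax.2 hmem hsub)
      obtain ⟨ℓ, hℓeq, hℓlt⟩ := hΨ.2 σ₁ hσ₁F hσ₁max
      obtain ⟨ℓ', hℓ'eq, hℓ'lt⟩ := hΨ'.2 σ'₁ hσ'₁F hσ'₁max
      have hle : ∀ x, ℓ x ≤ Ψ x := by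
        intro x
        by_cases hx : x ∈ σ₁
        · exact (hℓeq x hx).symm.le
        · exact (hℓlt x hx).le
      have hle' : ∀ x, ℓ' x ≤ Ψ' x := by
        intro x
        by_cases hx : x ∈ σ'₁
        · exact (hℓ'eq x hx).symm.le
        · exact (hℓ'lt x hx).le
      refine ⟨ℓ + ℓ', fun x hx => ?_, fun x hx => ?_⟩
      · have hx' : x ∈ σ₁ ∩ σ'₁ := heq ▸ hx
        simp only [LinearMap.add_apply, hℓeq x hx'.1, hℓ'eq x hx'.2, one_mul]
      · have hx' : x ∉ σ₁ ∩ σ'₁ := fun h => hx (heq ▸ h)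
        simp only [LinearMap.add_apply, one_mul]
        rcases (not_and_or.1 (fun h => hx' ⟨h.1, h.2⟩) : x ∉ σ₁ ∨ x ∉ σ'₁) with h | h
        · have := hℓlt x h
          have := hle' x
          linarith
        · have := hℓ'lt x h
          have := hle x
          linarith
  have hquasi : IsQuasifan {τ | ∃ σ ∈ F, ∃ σ' ∈ F', τ = σ ∩ σ'} := by
    refine ⟨?_, ?_, ?_, ?_⟩
    · have : {τ | ∃ σ ∈ F, ∃ σ' ∈ F', τ = σ ∩ σ'} = Set.image2 (· ∩ ·) F F' := by
        ext τ
        simp only [Set.mem_setOf_eq, Set.mem_image2]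
        constructor
        · rintro ⟨σ, hσ, σ', hσ', rfl⟩; exact ⟨σ, hσ, σ', hσ', rfl⟩
        · rintro ⟨σ, hσ, σ', hσ', rfl⟩; exact ⟨σ, hσ, σ', hσ', rfl⟩
      rw [this]
      exact Set.Finite.image2 _ hF.1 hF'.1
    · rintro τ ⟨σ, hσ, σ', hσ', rfl⟩
      exact QfAux.isPolyCone_inter (hF.2.1 σ hσ) (hF'.2.1 σ' hσ')
    · rintro τ ⟨σ, hσ, σ', hσ', rfl⟩ υ hfacet
      exact QfAux.face_of_inter_mem hF hF' hσ hσ' hfacet.1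
    · rintro τ ⟨σ, hσ, σ', hσ', rfl⟩ υ ⟨ρ, hρ, ρ', hρ', rfl⟩
      obtain ⟨h1, h2⟩ := hF.2.2.2 σ hσ ρ hρ
      obtain ⟨h1', h2'⟩ := hF'.2.2.2 σ' hσ' ρ' hρ'
      constructor
      · obtain ⟨m, hm, hmeq⟩ := h1
        obtain ⟨m', hm', hm'eq⟩ := h1'
        refine ⟨m + m', fun x hx => add_nonneg (hm x hx.1) (hm' x hx.2), ?_⟩
        ext x
        simp only [Set.mem_inter_iff, Set.mem_setOf_eq, LinearMap.add_apply]
        constructor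
        · rintro ⟨⟨hxσ, hxσ'⟩, hxρ, hxρ'⟩
          have e1 : m x = 0 := by
            have : x ∈ σ ∩ {x | m x = 0} := by rw [← hmeq]; exact ⟨hxσ, hxρ⟩
            exact this.2
          have e2 : m' x = 0 := by
            have : x ∈ σ' ∩ {x | m' x = 0} := by rw [← hm'eq]; exact ⟨hxσ', hxρ'⟩
            exact this.2
          exact ⟨⟨hxσ, hxσ'⟩, by rw [e1, e2, add_zero]⟩
        · rintro ⟨⟨hxσ, hxσ'⟩, hsum⟩
          have e1 : m x = 0 := by
            have p1 := hm x hxσ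
            have p2 := hm' x hxσ'
            linarith
          have e2 : m' x = 0 := by
            have p1 := hm x hxσ
            have p2 := hm' x hxσ'
            linarith
          have q1 : x ∈ σ ∩ ρ := by rw [hmeq]; exact ⟨hxσ, e1⟩
          have q2 : x ∈ σ' ∩ ρ' := by rw [hm'eq]; exact ⟨hxσ', e2⟩
          exact ⟨⟨hxσ, hxσ'⟩, q1.2, q2.2⟩
      · obtain ⟨m, hm, hmeq⟩ := h2
        obtain ⟨m', hm', hm'eq⟩ := h2'
        refine ⟨m + m', fun x hx => add_nonneg (hm x hx.1) (hm' x hx.2), ?_⟩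
        ext x
        simp only [Set.mem_inter_iff, Set.mem_setOf_eq, LinearMap.add_apply]
        constructor
        · rintro ⟨⟨hxσ, hxσ'⟩, hxρ, hxρ'⟩
          have e1 : m x = 0 := by
            have : x ∈ ρ ∩ {x | m x = 0} := by rw [← hmeq]; exact ⟨hxσ, hxρ⟩
            exact this.2
          have e2 : m' x = 0 := by
            have : x ∈ ρ' ∩ {x | m' x = 0} := by rw [← hm'eq]; exact ⟨hxσ', hxρ'⟩
            exact this.2
          exact ⟨⟨hxρ, hxρ'⟩, by rw [e1, e2, add_zero]⟩
        · rintro ⟨⟨hxρ, hxρ'⟩, hsum⟩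
          have e1 : m x = 0 := by
            have p1 := hm x hxρ
            have p2 := hm' x hxρ'
            linarith
          have e2 : m' x = 0 := by
            have p1 := hm x hxρ
            have p2 := hm' x hxρ'
            linarith
          have q1 : x ∈ σ ∩ ρ := by rw [hmeq]; exact ⟨hxρ, e1⟩
          have q2 : x ∈ σ' ∩ ρ' := by rw [hm'eq]; exact ⟨hxρ', e2⟩
          exact ⟨⟨q1.1, q2.1⟩, hxρ, hxρ'⟩
  exact ⟨⟨1, one_pos, hstrict⟩, hquasi, ⟨_, hstrict⟩⟩
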